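/- Let n ≥ 1 and let 0 ≤ l < k ≤ n. Then Tr(B_k · C_l) = 0. -/

import Mathlib

open Finset Matrix
open Polynomial

noncomputable section

/-- Hamming weight of a basis label. -/
def hw {n : ℕ} (z : Fin n → Bool) : ℕ := (Finset.univ.filter fun i => z i = true).card

/-- The sign `(-1)^{z i}` of a bit. -/
def sgn (b : Bool) : ℂ := if b = true then -1 else 1

lemma poly1 {n : ℕ} (S : Finset (Fin n)) :
    ∑ z : Fin n → Bool, Polynomial.C (∏ i ∈ S, sgn (z i)) * (X : ℂ[X]) ^ hw z
      = (1 - X) ^ S.card * (1 + X) ^ (n - S.card) := by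
  have hterm : ∀ z : Fin n → Bool,
      Polynomial.C (∏ i ∈ S, sgn (z i)) * (X : ℂ[X]) ^ hw z
        = ∏ i : Fin n, ((if i ∈ S then Polynomial.C (sgn (z i)) else 1) *
            (if z i = true then (X : ℂ[X]) else 1)) := by
    intro z
    rw [Finset.prod_mul_distrib]
    congr 1
    · rw [map_prod]
      conv_rhs => rw [Finset.prod_ite_mem]
      rw [Finset.univ_inter]
    · rw [hw, Finset.prod_ite, Finset.prod_const, Finset.prod_const, one_pow, mul_one]
  calc ∑ z : Fin n → Bool, Polynomial.C (∏ i ∈ S, sgn (z i)) * (X : ℂ[X]) ^ hw z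
      = ∑ z : Fin n → Bool, ∏ i : Fin n,
          ((if i ∈ S then Polynomial.C (sgn (z i)) else 1) *
            (if z i = true then (X : ℂ[X]) else 1)) := by
        exact Finset.sum_congr rfl fun z _ => hterm z
    _ = ∏ i : Fin n, ∑ b : Bool,
          ((if i ∈ S then Polynomial.C (sgn b) else 1) *
            (if b = true then (X : ℂ[X]) else 1)) := (Fintype.prod_sum (fun (i : Fin n) (b : Bool) =>
          (if i ∈ S then Polynomial.C (sgn b) else 1) *
            (if b = true then (X : ℂ[X]) else 1))).symm
    _ = ∏ i : Fin n, (if i ∈ S then (1 - X) else (1 + X)) := by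
        refine Finset.prod_congr rfl fun i _ => ?_
        by_cases h : i ∈ S <;> simp [h, sgn, Fintype.sum_bool] <;> ring
    _ = (1 - X) ^ S.card * (1 + X) ^ (n - S.card) := by
        rw [Finset.prod_ite, Finset.prod_const, Finset.prod_const]
        congr 2
        · simp [Finset.filter_mem_eq_inter]
        · have : Finset.univ.filter (fun i => i ∉ S) = Sᶜ := by
            ext i; simp
          rw [this, Finset.card_compl]
          simp

lemma hQdeg (n l : ℕ) (hl : l ≤ n) :
    ((1 - X) ^ l * (1 + X) ^ (n - l) : ℂ[X]).natDegree ≤ n := by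
  have h1 : ((1 - X : ℂ[X])).natDegree ≤ 1 := by
    have : (1 - X : ℂ[X]) = -(X - Polynomial.C 1) := by rw [Polynomial.C_1]; ring
    rw [this, natDegree_neg, natDegree_X_sub_C]
  have h2 : ((1 + X : ℂ[X])).natDegree ≤ 1 := by
    have : (1 + X : ℂ[X]) = X + Polynomial.C 1 := by rw [Polynomial.C_1]; ring
    rw [this, natDegree_X_add_C]
  calc ((1 - X) ^ l * (1 + X) ^ (n - l) : ℂ[X]).natDegree
      ≤ ((1 - X : ℂ[X]) ^ l).natDegree + ((1 + X : ℂ[X]) ^ (n - l)).natDegree :=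
        natDegree_mul_le
    _ ≤ l * 1 + (n - l) * 1 := by
        gcongr <;> [exact (natDegree_pow_le).trans (by nlinarith [Nat.zero_le l]);
          exact (natDegree_pow_le).trans (by nlinarith [Nat.zero_le (n-l)])]
    _ ≤ n := by omega

lemma keyid (n l : ℕ) (hl : l ≤ n) :
    ∑ m ∈ Finset.range (n+1),
        Polynomial.C ((-1 : ℂ)^m * (((1 - X) ^ l * (1 + X) ^ (n - l) : ℂ[X]).coeff m)) *
          ((1 + X) ^ (n - m) * X ^ m)
      = ((1 + 2*X : ℂ[X])) ^ l := by
  set Q : ℂ[X] := (1 - X) ^ l * (1 + X) ^ (n - l) with hQ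
  set L : ℂ[X] := ∑ m ∈ Finset.range (n+1),
      Polynomial.C ((-1 : ℂ)^m * (Q.coeff m)) * ((1 + X) ^ (n - m) * X ^ m) with hL
  have hfun : ∀ y : ℂ, 1 + y ≠ 0 → L.eval y = ((1 + 2*X : ℂ[X]) ^ l).eval y := by
    intro y hy
    have heL : L.eval y = ∑ m ∈ Finset.range (n+1),
        (-1 : ℂ)^m * Q.coeff m * ((1 + y) ^ (n - m) * y ^ m) := by
      simp [hL, eval_finset_sum]
    set t : ℂ := -y / (1 + y) with ht
    have hterm : ∀ m ∈ Finset.range (n+1),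
        (-1 : ℂ)^m * Q.coeff m * ((1 + y) ^ (n - m) * y ^ m)
          = Q.coeff m * t ^ m * (1 + y) ^ n := by
      intro m hm
      have hmn : m ≤ n := by simp at hm; omega
      have hsplit : (1 + y) ^ n = (1 + y) ^ m * (1 + y) ^ (n - m) := by
        rw [← pow_add]; congr 1; omega
      rw [hsplit, ht, div_pow]
      field_simp
      ring
    have hsum : L.eval y = (∑ m ∈ Finset.range (n+1), Q.coeff m * t ^ m) * (1 + y) ^ n := by
      rw [heL, Finset.sum_congr rfl hterm, ← Finset.sum_mul]
    have hdeg : Q.natDegree < n + 1 := Nat.lt_succ_of_le (hQdeg n l hl)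
    have heval : ∑ m ∈ Finset.range (n+1), Q.coeff m * t ^ m = Q.eval t :=
      (Polynomial.eval_eq_sum_range' hdeg t).symm
    have hQt : Q.eval t = (1 - t) ^ l * (1 + t) ^ (n - l) := by simp [hQ]
    have h1t : 1 - t = (1 + 2*y) / (1 + y) := by rw [ht]; field_simp; ring
    have h2t : 1 + t = 1 / (1 + y) := by rw [ht]; field_simp; ring
    have hsplit2 : (1 + y) ^ n = (1 + y) ^ l * (1 + y) ^ (n - l) := by
      rw [← pow_add]; congr 1; omega
    have hRHS : ((1 + 2*X : ℂ[X]) ^ l).eval y = (1 + 2*y) ^ l := by simp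
    rw [hsum, heval, hQt, h1t, h2t, hsplit2, div_pow, div_pow, hRHS, one_pow]
    have hyl : (1 + y) ^ l ≠ 0 := pow_ne_zero _ hy
    have hynl : (1 + y) ^ (n - l) ≠ 0 := pow_ne_zero _ hy
    field_simp
  have hzero : L - (1 + 2*X) ^ l = 0 := by
    apply Polynomial.eq_zero_of_infinite_isRoot
    apply Set.Infinite.mono (s := {y : ℂ | y ≠ -1})
    · intro y hy
      have : 1 + y ≠ 0 := fun h => hy (by linear_combination h)
      simp only [Set.mem_setOf_eq, IsRoot, eval_sub, hfun y this, sub_self]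
    · have : ({y : ℂ | y ≠ -1}) = ({-1} : Set ℂ)ᶜ := by ext y; simp
      rw [this]
      exact Set.Finite.infinite_compl (Set.finite_singleton _)
  linear_combination hzero

lemma sum_coeff_zero (n k l : ℕ) (hlk : l < k) (hk : k ≤ n) :
    ∑ m ∈ Finset.range (k+1), (-1 : ℂ)^m * ((n - m).choose (k - m) : ℂ) *
        (((1 - X) ^ l * (1 + X) ^ (n - l) : ℂ[X]).coeff m) = 0 := by
  have hid := keyid n l (le_of_lt (lt_of_lt_of_le hlk hk))
  have hcoeff := congrArg (fun p => Polynomial.coeff p k) hid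
  set Q : ℂ[X] := (1 - X) ^ l * (1 + X) ^ (n - l) with hQ
  -- RHS coeff is zero
  have hdeg : ((1 + 2*X : ℂ[X]) ^ l).natDegree < k := by
    have h1 : (1 + 2*X : ℂ[X]).natDegree ≤ 1 := by
      have h2 : ((2:ℂ[X])*X).natDegree ≤ 1 := natDegree_mul_le.trans (by simp)
      exact (natDegree_add_le _ _).trans (by simp [h2])
    calc ((1 + 2*X : ℂ[X]) ^ l).natDegree ≤ l * (1 + 2*X : ℂ[X]).natDegree :=
          natDegree_pow_le
      _ ≤ l * 1 := by gcongr
      _ < k := by omega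
  have hR : (((1 + 2*X : ℂ[X])) ^ l).coeff k = 0 :=
    coeff_eq_zero_of_natDegree_lt hdeg
  rw [hR, Polynomial.finset_sum_coeff] at hcoeff
  have hterm : ∀ m ∈ Finset.range (n+1),
      (Polynomial.C ((-1 : ℂ)^m * (Q.coeff m)) * ((1 + X) ^ (n - m) * X ^ m)).coeff k
        = if m ≤ k then (-1 : ℂ)^m * ((n - m).choose (k - m) : ℂ) * Q.coeff m else 0 := by
    intro m _
    rw [coeff_C_mul, Polynomial.coeff_mul_X_pow']
    by_cases h : m ≤ k
    · simp only [h, if_true, Polynomial.coeff_one_add_X_pow]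
      ring
    · simp [h]
  rw [Finset.sum_congr rfl hterm] at hcoeff
  calc ∑ m ∈ Finset.range (k+1), (-1 : ℂ)^m * ((n - m).choose (k - m) : ℂ) * Q.coeff m
      = ∑ m ∈ Finset.range (k+1),
          (if m ≤ k then (-1 : ℂ)^m * ((n - m).choose (k - m) : ℂ) * Q.coeff m else 0) := by
        refine Finset.sum_congr rfl fun m hm => ?_
        rw [if_pos (by simp at hm; omega)]
    _ = ∑ m ∈ Finset.range (n+1),
          (if m ≤ k then (-1 : ℂ)^m * ((n - m).choose (k - m) : ℂ) * Q.coeff m else 0) := by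
        refine Finset.sum_subset (Finset.range_subset_range.mpr (by omega)) ?_
        intro m hm hms
        rw [if_neg (by simp at hm hms; omega)]
    _ = 0 := hcoeff

lemma poly_main (n l : ℕ) :
    ∑ z : Fin n → Bool, Polynomial.C (∑ S ∈ Finset.powersetCard l (Finset.univ : Finset (Fin n)),
        ∏ i ∈ S, sgn (z i)) * (X : ℂ[X]) ^ hw z
      = Polynomial.C ((n.choose l : ℂ)) * ((1 - X) ^ l * (1 + X) ^ (n - l)) := by
  have h1 : ∀ z : Fin n → Bool,
      Polynomial.C (∑ S ∈ Finset.powersetCard l (Finset.univ : Finset (Fin n)),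
        ∏ i ∈ S, sgn (z i)) * (X : ℂ[X]) ^ hw z
      = ∑ S ∈ Finset.powersetCard l (Finset.univ : Finset (Fin n)),
          Polynomial.C (∏ i ∈ S, sgn (z i)) * (X : ℂ[X]) ^ hw z := by
    intro z; rw [map_sum, Finset.sum_mul]
  rw [Finset.sum_congr rfl fun z _ => h1 z, Finset.sum_comm]
  have h2 : ∀ S ∈ Finset.powersetCard l (Finset.univ : Finset (Fin n)),
      ∑ z : Fin n → Bool, Polynomial.C (∏ i ∈ S, sgn (z i)) * (X : ℂ[X]) ^ hw z
        = (1 - X) ^ l * (1 + X) ^ (n - l) := by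
    intro S hS
    have hcard : S.card = l := (Finset.mem_powersetCard.mp hS).2
    rw [poly1 S, hcard]
  rw [Finset.sum_congr rfl h2, Finset.sum_const, Finset.card_powersetCard,
    Finset.card_univ, Fintype.card_fin, nsmul_eq_mul]
  norm_cast

/-- The operator `C_l`: the diagonal matrix with entry
`∑_{S ⊆ Fin n, |S| = l} ∏_{i ∈ S} (-1)^{z i}`. -/
def Cmat (n l : ℕ) : Matrix (Fin n → Bool) (Fin n → Bool) ℂ :=
  Matrix.diagonal fun z => ∑ S ∈ Finset.powersetCard l (Finset.univ : Finset (Fin n)),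
    ∏ i ∈ S, sgn (z i)

/-- The projector `Π_m` onto the Hamming-weight-`m` sector. -/
def Pimat (n m : ℕ) : Matrix (Fin n → Bool) (Fin n → Bool) ℂ :=
  Matrix.diagonal fun z => if hw z = m then 1 else 0

/-- The operator `B_k = ∑_{m=0}^{k} (-1)^m C(n-m, k-m) Π_m`. -/
def Bmat (n k : ℕ) : Matrix (Fin n → Bool) (Fin n → Bool) ℂ :=
  ∑ m ∈ Finset.range (k+1), ((-1 : ℂ)^m * (Nat.choose (n-m) (k-m) : ℂ)) • Pimat n m

/-- `Tr(B_k C_l) = 0` for `l < k`. -/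
theorem stmt8 (n k l : ℕ) (hn : 1 ≤ n) (hlk : l < k) (hk : k ≤ n) :
    Matrix.trace (Bmat n k * Cmat n l) = 0 := by
  set Q : ℂ[X] := (1 - X) ^ l * (1 + X) ^ (n - l) with hQ
  set Cd : (Fin n → Bool) → ℂ := fun z =>
    ∑ S ∈ Finset.powersetCard l (Finset.univ : Finset (Fin n)), ∏ i ∈ S, sgn (z i) with hCd
  have htr : Matrix.trace (Bmat n k * Cmat n l)
      = ∑ m ∈ Finset.range (k+1), ((-1 : ℂ)^m * (Nat.choose (n-m) (k-m) : ℂ)) *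
          ∑ z : Fin n → Bool, (if hw z = m then 1 else 0) * Cd z := by
    rw [Bmat, Finset.sum_mul, trace_sum]
    refine Finset.sum_congr rfl fun m _ => ?_
    rw [smul_mul_assoc, trace_smul, smul_eq_mul]
    congr 1
    rw [Pimat, Cmat, diagonal_mul_diagonal, trace_diagonal]
  have hcoe : ∀ m : ℕ, (∑ z : Fin n → Bool, (if hw z = m then 1 else 0) * Cd z)
      = ((n.choose l : ℂ)) * Q.coeff m := by
    intro m
    have := congrArg (fun p => Polynomial.coeff p m) (poly_main n l)
    simp only [coeff_C_mul, Polynomial.finset_sum_coeff] at this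
    rw [← hQ] at this
    rw [← this]
    refine Finset.sum_congr rfl fun z _ => ?_
    rw [Polynomial.coeff_X_pow]
    by_cases h : hw z = m
    · simp [h, hCd, mul_comm]
    · simp only [h, hCd, if_false]
      rw [if_neg (fun hh => h hh.symm)]; ring
  rw [htr]
  calc ∑ m ∈ Finset.range (k+1), ((-1 : ℂ)^m * (Nat.choose (n-m) (k-m) : ℂ)) *
          ∑ z : Fin n → Bool, (if hw z = m then 1 else 0) * Cd z
      = (n.choose l : ℂ) * ∑ m ∈ Finset.range (k+1),
          (-1 : ℂ)^m * (Nat.choose (n-m) (k-m) : ℂ) * Q.coeff m := by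
        rw [Finset.mul_sum]
        refine Finset.sum_congr rfl fun m _ => ?_
        rw [hcoe m]; ring
    _ = 0 := by rw [sum_coeff_zero n k l hlk hk]; ring
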